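/- Let K ≥ 1 and j ≥ 0 be integers and let a, b be real numbers. Set q := ⌊a + 2bK⌋ and ω := a + 2bK − q. Then I_{C₁}(K,j;a−q,b) = i · exp(2πi a K + 2πi b K²) · ∑_{l=0}^{j} i^l · binom(j,l) · Ĩ_{C₀}(K,l; ω, b). -/

import Mathlib

open scoped BigOperators

/-- `I_{C₁}(K,j;c,b)`: the contour integral of `z^j exp(2πi c z + 2πi b z²)`
along the vertical segment from `K` to `K+iK`. -/
noncomputable def IC1 (K j : ℕ) (c b : ℝ) : ℂ :=
  Complex.I * ((K : ℂ) ^ j)⁻¹ *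
    ∫ t in (0 : ℝ)..(K : ℝ), ((K : ℂ) + Complex.I * (t : ℂ)) ^ j *
      Complex.exp (2 * (Real.pi : ℂ) * Complex.I * (c : ℂ) *
          ((K : ℂ) + Complex.I * (t : ℂ)) +
        2 * (Real.pi : ℂ) * Complex.I * (b : ℂ) *
          ((K : ℂ) + Complex.I * (t : ℂ)) ^ 2)

/-- `Ĩ_{C₀}(K,l;w,b) = K^{-l} ∫_0^K t^l exp(−2πwt − 2πib t²) dt`. -/
noncomputable def ItC0 (K l : ℕ) (w b : ℝ) : ℂ :=
  ((K : ℂ) ^ l)⁻¹ * ∫ t in (0 : ℝ)..(K : ℝ), (t : ℂ) ^ l *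
    Complex.exp (-2 * (Real.pi : ℂ) * (w : ℂ) * (t : ℂ) -
      2 * (Real.pi : ℂ) * Complex.I * (b : ℂ) * (t : ℂ) ^ 2)

/-- Evaluation of the isolated term `I_{C₁}(K,j;a−q,b)` in terms of the
integrals `Ĩ_{C₀}(K,l;ω,b)`. -/
theorem IC1_top_term_eq (K : ℕ) (hK : 1 ≤ K) (j : ℕ) (a b : ℝ) :
    IC1 K j (a - ((⌊a + 2 * b * K⌋ : ℤ) : ℝ)) b =
      Complex.I * Complex.exp (2 * (Real.pi : ℂ) * Complex.I * (a : ℂ) * (K : ℂ) +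
          2 * (Real.pi : ℂ) * Complex.I * (b : ℂ) * (K : ℂ) ^ 2) *
        ∑ l ∈ Finset.range (j + 1), Complex.I ^ l * (j.choose l : ℂ) *
          ItC0 K l (Int.fract (a + 2 * b * K)) b := by
  have hK0 : (K : ℂ) ≠ 0 := Nat.cast_ne_zero.mpr (by omega)
  set q : ℤ := ⌊a + 2 * b * K⌋ with hq
  set ω : ℝ := Int.fract (a + 2 * b * K) with hω
  have hωc : (ω : ℂ) = (a : ℂ) + 2 * b * K - q := by
    rw [hω, Int.fract, hq]; push_cast; ring
  set G : ℂ := 2 * (Real.pi : ℂ) * Complex.I * (a : ℂ) * (K : ℂ) +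
      2 * (Real.pi : ℂ) * Complex.I * (b : ℂ) * (K : ℂ) ^ 2 with hG
  have key : ∀ t : ℝ,
      ((K : ℂ) + Complex.I * (t : ℂ)) ^ j *
        Complex.exp (2 * (Real.pi : ℂ) * Complex.I * ((a - (q : ℝ) : ℝ) : ℂ) *
            ((K : ℂ) + Complex.I * (t : ℂ)) +
          2 * (Real.pi : ℂ) * Complex.I * (b : ℂ) *
            ((K : ℂ) + Complex.I * (t : ℂ)) ^ 2)
      = ∑ l ∈ Finset.range (j + 1),
          ((j.choose l : ℂ) * (K : ℂ) ^ (j - l) * Complex.I ^ l * Complex.exp G) *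
            ((t : ℂ) ^ l * Complex.exp (-2 * (Real.pi : ℂ) * (ω : ℂ) * (t : ℂ) -
              2 * (Real.pi : ℂ) * Complex.I * (b : ℂ) * (t : ℂ) ^ 2)) := by
    intro t
    have hbin : ((K : ℂ) + Complex.I * (t : ℂ)) ^ j
        = ∑ l ∈ Finset.range (j + 1),
            (Complex.I * (t : ℂ)) ^ l * (K : ℂ) ^ (j - l) * (j.choose l : ℂ) := by
      rw [add_comm]; exact add_pow _ _ _
    have hE : (2 * (Real.pi : ℂ) * Complex.I * ((a - (q : ℝ) : ℝ) : ℂ) *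
            ((K : ℂ) + Complex.I * (t : ℂ)) +
          2 * (Real.pi : ℂ) * Complex.I * (b : ℂ) *
            ((K : ℂ) + Complex.I * (t : ℂ)) ^ 2)
        = (G + (-2 * (Real.pi : ℂ) * (ω : ℂ) * (t : ℂ) -
            2 * (Real.pi : ℂ) * Complex.I * (b : ℂ) * (t : ℂ) ^ 2))
          + ((-(q * (K : ℤ)) : ℤ) : ℂ) * (2 * (Real.pi : ℂ) * Complex.I) := by
      rw [hG, hωc]; push_cast
      linear_combination (2 * (Real.pi : ℂ) * ((a : ℂ) - q) * t + 4 * (Real.pi : ℂ) * b * K * t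
        + 2 * (Real.pi : ℂ) * b * (t : ℂ) ^ 2 * Complex.I) * Complex.I_sq
    rw [hE, Complex.exp_add, Complex.exp_int_mul_two_pi_mul_I, mul_one, Complex.exp_add, hbin,
      Finset.sum_mul]
    refine Finset.sum_congr rfl fun l _ => ?_
    rw [mul_pow]; ring
  have hInt : ∀ l : ℕ, IntervalIntegrable
      (fun t : ℝ => ((j.choose l : ℂ) * (K : ℂ) ^ (j - l) * Complex.I ^ l * Complex.exp G) *
        ((t : ℂ) ^ l * Complex.exp (-2 * (Real.pi : ℂ) * (ω : ℂ) * (t : ℂ) -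
          2 * (Real.pi : ℂ) * Complex.I * (b : ℂ) * (t : ℂ) ^ 2)))
      MeasureTheory.volume 0 (K : ℝ) := by
    intro l
    apply Continuous.intervalIntegrable
    fun_prop
  rw [IC1]
  rw [intervalIntegral.integral_congr (g := fun t : ℝ =>
      ∑ l ∈ Finset.range (j + 1),
        ((j.choose l : ℂ) * (K : ℂ) ^ (j - l) * Complex.I ^ l * Complex.exp G) *
          ((t : ℂ) ^ l * Complex.exp (-2 * (Real.pi : ℂ) * (ω : ℂ) * (t : ℂ) -
            2 * (Real.pi : ℂ) * Complex.I * (b : ℂ) * (t : ℂ) ^ 2)))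
      (fun t _ => key t)]
  rw [intervalIntegral.integral_finset_sum (fun l _ => hInt l)]
  rw [Finset.mul_sum, Finset.mul_sum]
  refine Finset.sum_congr rfl fun l hl => ?_
  rw [intervalIntegral.integral_const_mul, ItC0]
  have hl' : l ≤ j := by
    have := Finset.mem_range.mp hl; omega
  rw [pow_sub₀ _ hK0 hl']
  field_simp
  congr 1
  refine intervalIntegral.integral_congr fun x _ => ?_
  ring
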